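/- (Expansion of the divided-power c-monomials, used in the proof of Proposition 4.3 of the paper.) For every finite multiset μ of positive integers, one has the operator identities on P ⊗_F P: c*_μ = ∑_{σ ⊆ μ} (−1)^{ℓ(σ)} q^{−|μ| + |σ|} · a*_{μ∖σ} ⊗ a*_σ and c_μ = ∑_{σ ⊆ μ} (−1)^{ℓ(σ)} q^{−|μ| + |σ|} · a_{μ∖σ} ⊗ a_σ, where the sums run over all submultisets σ of μ. -/

import Mathlib

open MvPolynomial

noncomputable section

set_option linter.unusedSectionVars false

variable (F : Type*) [Field F] [CharZero F]

abbrev PP (F : Type*) [Field F] : Type _ := MvPolynomial ℕ+ F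

/-- `a_{-r}`: multiplication by `X r`. -/
def aNeg (r : ℕ+) : Module.End F (PP F) := LinearMap.mulLeft F (X r)

/-- `a_r := κ'_r • ∂/∂X_r`. -/
def aPos (κ : ℕ+ → F) (r : ℕ+) : Module.End F (PP F) :=
  κ r • ((pderiv r : Derivation F (PP F) (PP F)) : Module.End F (PP F))

lemma aNeg_commute (i j : ℕ+) : Commute (aNeg F i) (aNeg F j) := by
  apply LinearMap.ext
  intro p
  simp [aNeg, Module.End.mul_apply, mul_left_comm]

lemma pderiv_commute (i j : ℕ+) :
    Commute ((pderiv i : Derivation F (PP F) (PP F)) : Module.End F (PP F))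
      ((pderiv j : Derivation F (PP F) (PP F)) : Module.End F (PP F)) := by
  have h : (⁅(pderiv i : Derivation F (PP F) (PP F)),
      (pderiv j : Derivation F (PP F) (PP F))⁆ : Derivation F (PP F) (PP F)) = 0 := by
    apply derivation_ext
    intro k
    simp only [Derivation.commutator_apply, pderiv_X, Pi.single_apply, Derivation.zero_apply]
    split_ifs <;> simp
  have h2 : (⁅((pderiv i : Derivation F (PP F) (PP F)) : Module.End F (PP F)),
      ((pderiv j : Derivation F (PP F) (PP F)) : Module.End F (PP F))⁆ : Module.End F (PP F)) = 0 := by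
    rw [← Derivation.commutator_coe_linear_map, h]
    rfl
  rw [Ring.lie_def] at h2
  exact sub_eq_zero.mp h2

lemma aPos_commute (κ : ℕ+ → F) (i j : ℕ+) : Commute (aPos F κ i) (aPos F κ j) :=
  ((pderiv_commute F i j).smul_left (κ i)).smul_right (κ j)

/-- Product of a pairwise-commuting family of operators over a multiset. -/
def opProd {M : Type*} [Monoid M] (f : ℕ+ → M) (hf : ∀ i j, Commute (f i) (f j))
    (μ : Multiset ℕ+) : M :=
  (μ.map f).noncommProd (by
    intro x hx y hy _
    obtain ⟨i, _, rfl⟩ := Multiset.mem_map.mp hx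
    obtain ⟨j, _, rfl⟩ := Multiset.mem_map.mp hy
    exact hf i j)

/-- `m(μ)! := ∏_r m_r(μ)!`, the product of factorials of part multiplicities. -/
def mfact (μ : Multiset ℕ+) : ℕ := (μ.dedup.map fun r => (μ.count r).factorial).prod

/-- `|μ|`: the weight (sum of the parts) of `μ`. -/
def msum (μ : Multiset ℕ+) : ℕ := (μ.map fun r => (r : ℕ)).sum

/-- The multiset binomial coefficient `[μ ⫶ ν]`. -/
def mbinom (μ ν : Multiset ℕ+) : F :=
  if ν ≤ μ then (mfact μ : F) / ((mfact (μ - ν) : F) * (mfact ν : F)) else 0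

/-- `a*_μ := (1/m(μ)!) ∏_{r∈μ} a_{-r}`. -/
def aStar (μ : Multiset ℕ+) : Module.End F (PP F) :=
  ((mfact μ : F))⁻¹ • opProd (aNeg F) (aNeg_commute F) μ

/-- `a_μ := (1/m(μ)!) ∏_{r∈μ} a_r`. -/
def aLow (κ : ℕ+ → F) (μ : Multiset ℕ+) : Module.End F (PP F) :=
  ((mfact μ : F))⁻¹ • opProd (aPos F κ) (aPos_commute F κ) μ

/-- `ξ_λ := (1/m(λ)!) ∏_{r∈λ} κ'_r`. -/
def xiCoef (κ : ℕ+ → F) (lam : Multiset ℕ+) : F :=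
  ((mfact lam : F))⁻¹ * (lam.map κ).prod

open scoped TensorProduct

/-- `f ⊗ id` acting on `P ⊗ P`. -/
def op1 (f : Module.End F (PP F)) : Module.End F (PP F ⊗[F] PP F) :=
  TensorProduct.map f LinearMap.id

/-- `id ⊗ g` acting on `P ⊗ P`. -/
def op2 (g : Module.End F (PP F)) : Module.End F (PP F ⊗[F] PP F) :=
  TensorProduct.map LinearMap.id g

lemma op1_mul (f f' : Module.End F (PP F)) : op1 F (f * f') = op1 F f * op1 F f' := by
  simp only [op1, Module.End.mul_eq_comp, ← TensorProduct.map_comp, LinearMap.comp_id]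

lemma op2_mul (g g' : Module.End F (PP F)) : op2 F (g * g') = op2 F g * op2 F g' := by
  simp only [op2, Module.End.mul_eq_comp, ← TensorProduct.map_comp, LinearMap.comp_id]

lemma op1_op2_commute (f g : Module.End F (PP F)) : Commute (op1 F f) (op2 F g) := by
  unfold op1 op2
  rw [Commute, SemiconjBy, Module.End.mul_eq_comp, Module.End.mul_eq_comp,
    ← TensorProduct.map_comp, ← TensorProduct.map_comp]
  simp

lemma op1_commute {f f' : Module.End F (PP F)} (h : Commute f f') :
    Commute (op1 F f) (op1 F f') := by
  rw [Commute, SemiconjBy, ← op1_mul, ← op1_mul, h.eq]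

lemma op2_commute {g g' : Module.End F (PP F)} (h : Commute g g') :
    Commute (op2 F g) (op2 F g') := by
  rw [Commute, SemiconjBy, ← op2_mul, ← op2_mul, h.eq]

variable (q : F)

/-- `b_r := a_r ⊗ id + q^{-r} (id ⊗ a_r)`. -/
def bPos (κ : ℕ+ → F) (r : ℕ+) : Module.End F (PP F ⊗[F] PP F) :=
  op1 F (aPos F κ r) + (q⁻¹) ^ (r : ℕ) • op2 F (aPos F κ r)

/-- `b_{-r} := a_{-r} ⊗ id + q^{-r} (id ⊗ a_{-r})`. -/
def bNeg (r : ℕ+) : Module.End F (PP F ⊗[F] PP F) :=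
  op1 F (aNeg F r) + (q⁻¹) ^ (r : ℕ) • op2 F (aNeg F r)

/-- `c_r := q^{-r} (a_r ⊗ id) - id ⊗ a_r`. -/
def cPos (κ : ℕ+ → F) (r : ℕ+) : Module.End F (PP F ⊗[F] PP F) :=
  (q⁻¹) ^ (r : ℕ) • op1 F (aPos F κ r) - op2 F (aPos F κ r)

/-- `c_{-r} := q^{-r} (a_{-r} ⊗ id) - id ⊗ a_{-r}`. -/
def cNeg (r : ℕ+) : Module.End F (PP F ⊗[F] PP F) :=
  (q⁻¹) ^ (r : ℕ) • op1 F (aNeg F r) - op2 F (aNeg F r)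

lemma commute_aux {A B C D : Module.End F (PP F ⊗[F] PP F)} {x y : F}
    (hAC : Commute A C) (hAD : Commute A D) (hBC : Commute B C) (hBD : Commute B D) :
    Commute (x • A - B) (y • C - D) := by
  have eAC := LinearMap.congr_fun hAC.eq
  have eAD := LinearMap.congr_fun hAD.eq
  have eBC := LinearMap.congr_fun hBC.eq
  have eBD := LinearMap.congr_fun hBD.eq
  simp only [Module.End.mul_apply] at eAC eAD eBC eBD
  rw [Commute, SemiconjBy]
  apply LinearMap.ext
  intro v
  simp only [Module.End.mul_apply, LinearMap.sub_apply, LinearMap.smul_apply, map_sub, map_smul,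
    eAC, eAD, eBC, eBD]
  simp only [smul_sub, smul_comm y x]
  abel

lemma cNeg_commute (i j : ℕ+) : Commute (cNeg F q i) (cNeg F q j) := by
  unfold cNeg
  exact commute_aux F (op1_commute F (aNeg_commute F i j))
    (op1_op2_commute F (aNeg F i) (aNeg F j)) (op1_op2_commute F (aNeg F j) (aNeg F i)).symm
    (op2_commute F (aNeg_commute F i j))

lemma cPos_commute (κ : ℕ+ → F) (i j : ℕ+) : Commute (cPos F q κ i) (cPos F q κ j) := by
  unfold cPos
  exact commute_aux F (op1_commute F (aPos_commute F κ i j))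
    (op1_op2_commute F (aPos F κ i) (aPos F κ j))
    (op1_op2_commute F (aPos F κ j) (aPos F κ i)).symm
    (op2_commute F (aPos_commute F κ i j))

/-- `c*_μ := (1/m(μ)!) ∏_{r∈μ} c_{-r}`. -/
def cStar (μ : Multiset ℕ+) : Module.End F (PP F ⊗[F] PP F) :=
  ((mfact μ : F))⁻¹ • opProd (cNeg F q) (cNeg_commute F q) μ

/-- `c_μ := (1/m(μ)!) ∏_{r∈μ} c_r`. -/
def cLow (κ : ℕ+ → F) (μ : Multiset ℕ+) : Module.End F (PP F ⊗[F] PP F) :=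
  ((mfact μ : F))⁻¹ • opProd (cPos F q κ) (cPos_commute F q κ) μ


/-! ### Auxiliary lemmas for Statement 5 -/

namespace S5

lemma mfact_eq_prod (μ : Multiset ℕ+) :
    mfact μ = ∏ r ∈ μ.toFinset, (μ.count r).factorial := rfl

lemma mfact_pos (μ : Multiset ℕ+) : 0 < mfact μ := by
  rw [mfact_eq_prod]
  exact Finset.prod_pos fun r _ => Nat.factorial_pos _

lemma mfact_cons (a : ℕ+) (s : Multiset ℕ+) :
    mfact (a ::ₘ s) = (s.count a + 1) * mfact s := by
  have key : ∀ t : Multiset ℕ+,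
      mfact t = (t.count a).factorial * ∏ r ∈ t.toFinset.erase a, (t.count r).factorial := by
    intro t
    rw [mfact_eq_prod]
    by_cases h : a ∈ t.toFinset
    · rw [← Finset.mul_prod_erase _ _ h]
    · rw [Finset.erase_eq_of_notMem h,
        Multiset.count_eq_zero_of_notMem (by simpa using h)]
      simp
  rw [key (a ::ₘ s), key s]
  have h1 : (a ::ₘ s).toFinset.erase a = s.toFinset.erase a := by
    ext x
    simp only [Finset.mem_erase, Multiset.mem_toFinset, Multiset.mem_cons]
    tauto
  rw [h1]
  have h2 : ∀ r ∈ s.toFinset.erase a,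
      ((a ::ₘ s).count r).factorial = (s.count r).factorial := by
    intro r hr
    rw [Multiset.count_cons_of_ne (Finset.ne_of_mem_erase hr)]
  rw [Finset.prod_congr rfl h2, Multiset.count_cons_self, Nat.factorial_succ, mul_assoc]

lemma nat_aux {c1 c2 n k M1 M2 S : ℕ} (hk : k < n)
    (h1 : c1 * (M1 * ((k + 1) * M2)) = S)
    (h2 : c2 * ((n - (k + 1) + 1) * M1 * M2) = S) :
    (c1 + c2) * ((n - (k + 1) + 1) * M1 * ((k + 1) * M2)) = (n + 1) * S := by
  obtain ⟨d, rfl⟩ : ∃ d, n = k + d + 1 := ⟨n - k - 1, by omega⟩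
  have e2 : k + d + 1 - (k + 1) + 1 = d + 1 := by omega
  rw [e2] at h2 ⊢
  calc (c1 + c2) * ((d + 1) * M1 * ((k + 1) * M2))
      = (d + 1) * (c1 * (M1 * ((k + 1) * M2))) + (k + 1) * (c2 * ((d + 1) * M1 * M2)) := by
        ring
    _ = (d + 1) * S + (k + 1) * S := by rw [h1, h2]
    _ = (k + d + 1 + 1) * S := by ring

lemma count_powerset_mul (μ : Multiset ℕ+) :
    ∀ σ : Multiset ℕ+, σ ≤ μ →
      μ.powerset.count σ * (mfact (μ - σ) * mfact σ) = mfact μ := by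
  induction μ using Multiset.induction with
  | empty =>
    intro σ h
    rw [Multiset.le_zero] at h
    subst h
    simp [mfact]
  | cons a s ih =>
    intro σ h
    rw [Multiset.powerset_cons, Multiset.count_add]
    by_cases ha : a ∈ σ
    · obtain ⟨τ, rfl⟩ : ∃ τ, σ = a ::ₘ τ := ⟨σ.erase a, (Multiset.cons_erase ha).symm⟩
      have hτ : τ ≤ s := (Multiset.cons_le_cons_iff a).mp h
      have hmap : (Multiset.map (Multiset.cons a) s.powerset).count (a ::ₘ τ)
          = s.powerset.count τ :=
        Multiset.count_map_eq_count' _ _ (fun x y hxy => (Multiset.cons_inj_right a).mp hxy) τ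
      rw [Multiset.sub_cons, Multiset.erase_cons_head, hmap, mfact_cons a τ, mfact_cons a s]
      have hk : τ.count a ≤ s.count a := Multiset.count_le_of_le a hτ
      have ih2 := ih τ hτ
      rcases Nat.lt_or_ge (τ.count a) (s.count a) with hlt | hge
      · have hσs : a ::ₘ τ ≤ s := by
          rw [Multiset.le_iff_count]
          intro r
          by_cases hr : r = a
          · subst hr; rw [Multiset.count_cons_self]; omega
          · rw [Multiset.count_cons_of_ne hr]
            exact Multiset.count_le_of_le r hτ
        have ih1 := ih (a ::ₘ τ) hσs
        rw [mfact_cons a τ] at ih1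
        have hcnt : (s - (a ::ₘ τ)).count a = s.count a - (τ.count a + 1) := by
          rw [Multiset.count_sub, Multiset.count_cons_self]
        have hdecomp : s - τ = a ::ₘ (s - (a ::ₘ τ)) := by
          ext r
          by_cases hr : r = a
          · subst hr
            simp only [Multiset.count_cons_self, Multiset.count_sub]
            omega
          · simp only [Multiset.count_sub, Multiset.count_cons_of_ne hr]
        rw [hdecomp, mfact_cons a (s - (a ::ₘ τ)), hcnt] at ih2
        rw [hdecomp, mfact_cons a (s - (a ::ₘ τ)), hcnt]
        exact nat_aux hlt ih1 ih2
      · have hc1 : s.powerset.count (a ::ₘ τ) = 0 := by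
          rw [Multiset.count_eq_zero]
          intro hmem
          have := Multiset.count_le_of_le a (Multiset.mem_powerset.mp hmem)
          rw [Multiset.count_cons_self] at this
          omega
        have hkn : τ.count a = s.count a := le_antisymm hk hge
        have hdecomp : s - τ = s - (a ::ₘ τ) := by
          ext r
          by_cases hr : r = a
          · subst hr
            simp only [Multiset.count_sub, Multiset.count_cons_self]
            omega
          · simp only [Multiset.count_sub, Multiset.count_cons_of_ne hr]
        rw [hc1, zero_add, hdecomp]
        rw [hdecomp] at ih2
        calc s.powerset.count τ * (mfact (s - (a ::ₘ τ)) * ((τ.count a + 1) * mfact τ))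
            = (τ.count a + 1) * (s.powerset.count τ * (mfact (s - (a ::ₘ τ)) * mfact τ)) := by
              ring
          _ = (τ.count a + 1) * mfact s := by rw [ih2]
          _ = (s.count a + 1) * mfact s := by rw [hkn]
    · have hσs : σ ≤ s := by
        rw [Multiset.le_iff_count]
        intro r
        by_cases hr : r = a
        · subst hr
          simp [Multiset.count_eq_zero_of_notMem ha]
        · have := Multiset.count_le_of_le r h
          rwa [Multiset.count_cons_of_ne hr] at this
      have hmap : (Multiset.map (Multiset.cons a) s.powerset).count σ = 0 := by
        rw [Multiset.count_eq_zero]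
        intro hmem
        obtain ⟨x, _, rfl⟩ := Multiset.mem_map.mp hmem
        exact ha (Multiset.mem_cons_self a x)
      rw [hmap, add_zero, Multiset.cons_sub_of_le a hσs, mfact_cons a (s - σ),
        mfact_cons a s, Multiset.count_sub, Multiset.count_eq_zero_of_notMem ha,
        Nat.sub_zero]
      calc s.powerset.count σ * ((s.count a + 1) * mfact (s - σ) * mfact σ)
          = (s.count a + 1) * (s.powerset.count σ * (mfact (s - σ) * mfact σ)) := by ring
        _ = (s.count a + 1) * mfact s := by rw [ih σ hσs]

end S5

section S5Op

lemma opProd_zero {M : Type*} [Monoid M] (f : ℕ+ → M) (hf : ∀ i j, Commute (f i) (f j)) :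
    opProd f hf 0 = 1 := rfl

lemma opProd_cons {M : Type*} [Monoid M] (f : ℕ+ → M) (hf : ∀ i j, Commute (f i) (f j))
    (a : ℕ+) (s : Multiset ℕ+) :
    opProd f hf (a ::ₘ s) = f a * opProd f hf s := by
  unfold opProd
  simp only [Multiset.map_cons, Multiset.noncommProd_cons]

lemma opProd_commute {M : Type*} [Monoid M] (f : ℕ+ → M) (hf : ∀ i j, Commute (f i) (f j))
    (x : M) (h : ∀ i, Commute x (f i)) (μ : Multiset ℕ+) :
    Commute x (opProd f hf μ) := by
  unfold opProd
  refine Multiset.noncommProd_commute _ _ _ ?_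
  intro y hy
  obtain ⟨i, _, rfl⟩ := Multiset.mem_map.mp hy
  exact h i

lemma opProd_funext {M : Type*} [Monoid M] (f g : ℕ+ → M)
    (hf : ∀ i j, Commute (f i) (f j)) (hg : ∀ i j, Commute (g i) (g j))
    (h : f = g) (μ : Multiset ℕ+) : opProd f hf μ = opProd g hg μ := by
  subst h; rfl

lemma opProd_add_expand {R : Type*} [Ring R] (A B : ℕ+ → R)
    (hAA : ∀ i j, Commute (A i) (A j)) (hBB : ∀ i j, Commute (B i) (B j))
    (hAB : ∀ i j, Commute (A i) (B j)) (hsum : ∀ i j, Commute (A i + B i) (A j + B j))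
    (μ : Multiset ℕ+) :
    opProd (fun r => A r + B r) hsum μ
      = (μ.powerset.map fun σ => opProd A hAA (μ - σ) * opProd B hBB σ).sum := by
  induction μ using Multiset.induction with
  | empty => simp [opProd_zero, Multiset.powerset_zero]
  | cons a s ih =>
    rw [opProd_cons, ih, Multiset.powerset_cons, Multiset.map_add, Multiset.sum_add,
      Multiset.map_map, add_mul]
    congr 1
    · rw [← Multiset.sum_map_mul_left]
      apply congrArg Multiset.sum
      apply Multiset.map_congr rfl
      intro σ hσ
      have hσs : σ ≤ s := Multiset.mem_powerset.mp hσ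
      rw [Multiset.cons_sub_of_le a hσs, opProd_cons, mul_assoc]
    · rw [← Multiset.sum_map_mul_left]
      apply congrArg Multiset.sum
      apply Multiset.map_congr rfl
      intro σ hσ
      simp only [Function.comp_apply]
      rw [Multiset.sub_cons, Multiset.erase_cons_head, opProd_cons, ← mul_assoc,
        (opProd_commute A hAA (B a) (fun i => (hAB i a).symm) (s - σ)).eq, mul_assoc]

lemma op1_one : op1 F (1 : Module.End F (PP F)) = 1 := by
  simp [op1, Module.End.one_eq_id, TensorProduct.map_id]

lemma op2_one : op2 F (1 : Module.End F (PP F)) = 1 := by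
  simp [op2, Module.End.one_eq_id, TensorProduct.map_id]

lemma msum_cons (a : ℕ+) (s : Multiset ℕ+) : msum (a ::ₘ s) = (a : ℕ) + msum s := by
  simp [msum]

lemma msum_add (x y : Multiset ℕ+) : msum (x + y) = msum x + msum y := by
  simp [msum]

lemma opProd_smul_op1 (f : ℕ+ → Module.End F (PP F)) (hf : ∀ i j, Commute (f i) (f j))
    (hA : ∀ (i j : ℕ+), Commute ((q⁻¹) ^ (i : ℕ) • op1 F (f i)) ((q⁻¹) ^ (j : ℕ) • op1 F (f j)))
    (ν : Multiset ℕ+) :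
    opProd (fun r => (q⁻¹) ^ (r : ℕ) • op1 F (f r)) hA ν
      = (q⁻¹) ^ (msum ν) • op1 F (opProd f hf ν) := by
  induction ν using Multiset.induction with
  | empty =>
    simp [opProd_zero, msum, op1_one]
  | cons a s ih =>
    rw [opProd_cons, ih, opProd_cons f hf, msum_cons]
    simp only [smul_mul_smul_comm, ← op1_mul, ← pow_add]

lemma opProd_neg_op2 (f : ℕ+ → Module.End F (PP F)) (hf : ∀ i j, Commute (f i) (f j))
    (hB : ∀ (i j : ℕ+), Commute ((-1 : F) • op2 F (f i)) ((-1 : F) • op2 F (f j)))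
    (ν : Multiset ℕ+) :
    opProd (fun r => (-1 : F) • op2 F (f r)) hB ν
      = ((-1 : F) ^ (Multiset.card ν)) • op2 F (opProd f hf ν) := by
  induction ν using Multiset.induction with
  | empty =>
    simp [opProd_zero, op2_one]
  | cons a s ih =>
    rw [opProd_cons, ih, opProd_cons f hf, Multiset.card_cons, pow_succ]
    simp only [smul_mul_smul_comm, ← op2_mul]
    congr 1
    ring

lemma op1_mul_op2 (X Y : Module.End F (PP F)) :
    op1 F X * op2 F Y = TensorProduct.map X Y := by
  apply TensorProduct.ext'
  intro x y
  simp [op1, op2, Module.End.mul_apply]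

lemma map_smul_both (c d : F) (f g : Module.End F (PP F)) :
    TensorProduct.map (c • f) (d • g) = (c * d) • TensorProduct.map f g := by
  apply TensorProduct.ext'
  intro x y
  simp [TensorProduct.map_tmul, TensorProduct.smul_tmul', TensorProduct.tmul_smul, smul_smul,
    mul_comm]

lemma mfact_cast_ne_zero (μ : Multiset ℕ+) : ((mfact μ : F)) ≠ 0 :=
  Nat.cast_ne_zero.mpr (S5.mfact_pos μ).ne'


set_option maxHeartbeats 1000000 in
lemma s5Expand (hq : q ≠ 0) (f : ℕ+ → Module.End F (PP F))
    (hf : ∀ i j, Commute (f i) (f j))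
    (g : ℕ+ → Module.End F (PP F ⊗[F] PP F)) (hg : ∀ i j, Commute (g i) (g j))
    (hgdef : ∀ r, g r = (q⁻¹) ^ (r : ℕ) • op1 F (f r) - op2 F (f r))
    (μ : Multiset ℕ+) :
    ((mfact μ : F))⁻¹ • opProd g hg μ
      = ∑ σ ∈ μ.powerset.toFinset,
          (((-1 : F) ^ (Multiset.card σ)) * q ^ ((msum σ : ℤ) - (msum μ : ℤ))) •
            ((TensorProduct.map (((mfact (μ - σ) : F))⁻¹ • opProd f hf (μ - σ))
              (((mfact σ : F))⁻¹ • opProd f hf σ)) : Module.End F (PP F ⊗[F] PP F)) := by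
  have hAA : ∀ (i j : ℕ+), Commute ((q⁻¹) ^ (i : ℕ) • op1 F (f i)) ((q⁻¹) ^ (j : ℕ) • op1 F (f j)) :=
    fun i j => ((op1_commute F (hf i j)).smul_left _).smul_right _
  have hBB : ∀ (i j : ℕ+), Commute ((-1 : F) • op2 F (f i)) ((-1 : F) • op2 F (f j)) :=
    fun i j => ((op2_commute F (hf i j)).smul_left _).smul_right _
  have hAB : ∀ (i j : ℕ+), Commute ((q⁻¹) ^ (i : ℕ) • op1 F (f i)) ((-1 : F) • op2 F (f j)) :=
    fun i j => ((op1_op2_commute F (f i) (f j)).smul_left _).smul_right _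
  have hgAB : g = fun (r : ℕ+) => ((q⁻¹) ^ (r : ℕ) • op1 F (f r)) + (-1 : F) • op2 F (f r) := by
    funext r
    rw [hgdef r]
    module
  have hsum : ∀ (i j : ℕ+),
      Commute (((q⁻¹) ^ (i : ℕ) • op1 F (f i)) + (-1 : F) • op2 F (f i))
        (((q⁻¹) ^ (j : ℕ) • op1 F (f j)) + (-1 : F) • op2 F (f j)) := by
    intro i j
    have := hg i j
    rw [hgAB] at this
    exact this
  have step1 : opProd g hg μ
      = (μ.powerset.map fun σ =>
          opProd (fun r => (q⁻¹) ^ (r : ℕ) • op1 F (f r)) hAA (μ - σ) *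
          opProd (fun r => (-1 : F) • op2 F (f r)) hBB σ).sum :=
    (opProd_funext g _ hg hsum hgAB μ).trans
      (opProd_add_expand (fun r => (q⁻¹) ^ (r : ℕ) • op1 F (f r))
        (fun r => (-1 : F) • op2 F (f r)) hAA hBB hAB hsum μ)
  rw [step1, Finset.sum_multiset_map_count, Finset.smul_sum]
  apply Finset.sum_congr rfl
  intro σ hσ
  have hσμ : σ ≤ μ := Multiset.mem_powerset.mp (Multiset.mem_toFinset.mp hσ)
  rw [opProd_smul_op1 F q f hf hAA, opProd_neg_op2 F f hf hBB, ← Nat.cast_smul_eq_nsmul F,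
    smul_mul_smul_comm, op1_mul_op2, map_smul_both, smul_smul, smul_smul, smul_smul]
  congr 1
  have hmsum : msum (μ - σ) + msum σ = msum μ := by
    rw [← msum_add, tsub_add_cancel_of_le hσμ]
  have hzpow : q ^ ((msum σ : ℤ) - (msum μ : ℤ)) = (q⁻¹) ^ (msum (μ - σ)) := by
    have h : (msum σ : ℤ) - (msum μ : ℤ) = -(msum (μ - σ) : ℤ) := by omega
    rw [h, zpow_neg, zpow_natCast, inv_pow]
  have hcount : ((μ.powerset.count σ : F)) * ((mfact (μ - σ) : F) * (mfact σ : F)) =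
      (mfact μ : F) := by
    have h := S5.count_powerset_mul μ σ hσμ
    push_cast [← h]
    ring
  have h1 : (mfact μ : F) ≠ 0 := mfact_cast_ne_zero F μ
  have h2 : (mfact (μ - σ) : F) ≠ 0 := mfact_cast_ne_zero F (μ - σ)
  have h3 : (mfact σ : F) ≠ 0 := mfact_cast_ne_zero F σ
  have key : ((μ.powerset.count σ : F)) * (mfact μ : F)⁻¹ =
      (mfact (μ - σ) : F)⁻¹ * (mfact σ : F)⁻¹ := by
    field_simp
    linear_combination hcount
  rw [hzpow]
  linear_combination (q⁻¹ ^ msum (μ - σ) * (-1 : F) ^ Multiset.card σ) * key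

/-- expansion of the divided-power `c`-monomials, used in the proof of
Proposition 4.3: `c*_μ = ∑_{σ ⊆ μ} (−1)^{ℓ(σ)} q^{−|μ|+|σ|} · a*_{μ∖σ} ⊗ a*_σ` and
`c_μ = ∑_{σ ⊆ μ} (−1)^{ℓ(σ)} q^{−|μ|+|σ|} · a_{μ∖σ} ⊗ a_σ`, the sums running over all
submultisets `σ` of `μ`. -/
theorem statement5 (F : Type*) [Field F] [CharZero F] (q : F) (hq : q ≠ 0)
    (κ : ℕ+ → F) (μ : Multiset ℕ+) :
    (cStar F q μ =
      ∑ σ ∈ μ.powerset.toFinset,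
        (((-1 : F) ^ (Multiset.card σ)) * q ^ ((msum σ : ℤ) - (msum μ : ℤ))) •
          (TensorProduct.map (aStar F (μ - σ)) (aStar F σ) :
            Module.End F (PP F ⊗[F] PP F))) ∧
    (cLow F q κ μ =
      ∑ σ ∈ μ.powerset.toFinset,
        (((-1 : F) ^ (Multiset.card σ)) * q ^ ((msum σ : ℤ) - (msum μ : ℤ))) •
          (TensorProduct.map (aLow F κ (μ - σ)) (aLow F κ σ) :
            Module.End F (PP F ⊗[F] PP F))) := by
  constructor
  · exact s5Expand F q hq (aNeg F) (aNeg_commute F) (cNeg F q) (cNeg_commute F q)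
      (fun r => rfl) μ
  · exact s5Expand F q hq (aPos F κ) (aPos_commute F κ) (cPos F q κ) (cPos_commute F q κ)
      (fun r => rfl) μ
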